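/- arXiv:2512.13969 — 3 statements merged into one kernel-verified Lean document; each statement's English description precedes it below -/
import Mathlib

section
/- Define c(t,r) = ∑_{a=t}^r S(r,a)·C(a,t)·j^{r-a} for a fixed positive integer j. Then c satisfies the recurrence c(t,r) = c(t-1,r-1) + (j·t+1)·c(t,r-1) + j·(t+1)·c(t+1,r-1) for 1 ≤ t ≤ r, with boundary conditions c(r,r) = 1 for r ≥ 0 and c(t,r) = 0 when t > r. -/
open scoped BigOperators

/-- Stirling numbers of the second kind. -/
def stirling2 : ℕ → ℕ → ℕ
  | 0, 0 => 1
  | 0, _ + 1 => 0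
  | _ + 1, 0 => 0
  | n + 1, k + 1 => (k + 1) * stirling2 n (k + 1) + stirling2 n k

/-- `cSeq j t r = ∑_{a=t}^r S(r,a) C(a,t) j^{r-a}`. -/
def cSeq (j t r : ℕ) : ℕ :=
  ∑ a ∈ Finset.Icc t r, stirling2 r a * a.choose t * j ^ (r - a)

lemma stirling2_of_lt : ∀ n k : ℕ, n < k → stirling2 n k = 0
  | 0, _ + 1, _ => rfl
  | n + 1, k + 1, h => by
      show (k + 1) * stirling2 n (k + 1) + stirling2 n k = 0
      rw [stirling2_of_lt n (k + 1) (by omega), stirling2_of_lt n k (by omega)]; ring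

lemma stirling2_self : ∀ n : ℕ, stirling2 n n = 1
  | 0 => rfl
  | n + 1 => by
      show (n + 1) * stirling2 n (n + 1) + stirling2 n n = 1
      rw [stirling2_of_lt n (n + 1) (by omega), stirling2_self n]; ring

lemma sum_Icc_shift (f : ℕ → ℕ) (u v : ℕ) :
    ∑ a ∈ Finset.Icc (u + 1) (v + 1), f a = ∑ b ∈ Finset.Icc u v, f (b + 1) := by
  rw [show u + 1 = u + 1 from rfl, ← Finset.map_add_right_Icc, Finset.sum_map]
  rfl

lemma choose_absorb (b t : ℕ) :
    b * b.choose (t + 1) = (t + 1) * b.choose (t + 1) + (t + 2) * b.choose (t + 2) := by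
  rcases le_or_gt (t + 1) b with h | h
  · have h1 := Nat.choose_succ_right_eq b (t + 1)
    have h3 : (t + 2) * b.choose (t + 2) = b.choose (t + 1) * (b - (t + 1)) := by
      rw [mul_comm]; exact h1
    rw [h3, mul_comm (t + 1), ← Nat.mul_add, Nat.add_sub_cancel' h, mul_comm]
  · rw [Nat.choose_eq_zero_of_lt h, Nat.choose_eq_zero_of_lt (by omega)]; ring

lemma sum_pad (j s t u v : ℕ) (h1 : u ≤ t) (h2 : s ≤ v) :
    ∑ b ∈ Finset.Icc u v, stirling2 s b * b.choose t * j ^ (s - b) = cSeq j t s := by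
  rw [cSeq]
  symm
  apply Finset.sum_subset
  · intro x hx
    simp only [Finset.mem_Icc] at *
    omega
  · intro x hx hx'
    simp only [Finset.mem_Icc] at hx hx'
    rcases lt_or_ge x t with h | h
    · rw [Nat.choose_eq_zero_of_lt h]; ring
    · rw [stirling2_of_lt s x (by omega)]; ring

lemma cSeq_rec (j u s : ℕ) (hus : u ≤ s) :
    cSeq j (u + 1) (s + 1) =
      cSeq j u s + (j * (u + 1) + 1) * cSeq j (u + 1) s + j * (u + 2) * cSeq j (u + 2) s := by
  set I := Finset.Icc u (s + 1) with hI
  -- the shifted "G" sums are equal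
  have hG : ∑ b ∈ I, (b + 1) * stirling2 s (b + 1) * (b + 1).choose (u + 1) * j ^ (s - b)
      = ∑ b ∈ I, b * stirling2 s b * b.choose (u + 1) * j ^ (s + 1 - b) := by
    have h1 := sum_Icc_shift (fun a => a * stirling2 s a * a.choose (u + 1) * j ^ (s + 1 - a)) u (s + 1)
    simp only [Nat.succ_sub_succ] at h1
    rw [← h1]
    have h2 : ∑ a ∈ Finset.Icc (u + 1) (s + 2),
        a * stirling2 s a * a.choose (u + 1) * j ^ (s + 1 - a)
        = ∑ a ∈ Finset.Icc u (s + 2), a * stirling2 s a * a.choose (u + 1) * j ^ (s + 1 - a) := by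
      apply Finset.sum_subset
      · intro x hx; simp only [Finset.mem_Icc] at *; omega
      · intro x hx hx'
        simp only [Finset.mem_Icc] at hx hx'
        have : x = u := by omega
        subst this
        rw [Nat.choose_succ_self]; ring
    rw [h2, Finset.sum_Icc_succ_top (by omega : u ≤ s + 2),
      stirling2_of_lt s (s + 2) (by omega)]
    ring
  -- pointwise identity with the telescoping term
  have point : ∀ b ∈ I,
      stirling2 (s + 1) (b + 1) * (b + 1).choose (u + 1) * j ^ (s - b)
        + b * stirling2 s b * b.choose (u + 1) * j ^ (s + 1 - b)
      = (stirling2 s b * b.choose u * j ^ (s - b)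
          + (j * (u + 1) + 1) * (stirling2 s b * b.choose (u + 1) * j ^ (s - b))
          + j * (u + 2) * (stirling2 s b * b.choose (u + 2) * j ^ (s - b)))
        + (b + 1) * stirling2 s (b + 1) * (b + 1).choose (u + 1) * j ^ (s - b) := by
    intro b hb
    simp only [hI, Finset.mem_Icc] at hb
    rw [show stirling2 (s + 1) (b + 1) = (b + 1) * stirling2 s (b + 1) + stirling2 s b from rfl,
      Nat.choose_succ_succ b u]
    rcases le_or_gt b s with h | h
    · rw [show s + 1 - b = (s - b) + 1 by omega, pow_succ]
      have habs := choose_absorb b u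
      zify at habs ⊢
      linear_combination ((stirling2 s b : ℤ) * j ^ (s - b) * j) * habs
    · have : b = s + 1 := by omega
      subst this
      rw [stirling2_of_lt s (s + 1) (by omega), stirling2_of_lt s (s + 2) (by omega)]
      ring
  have hsum : (∑ b ∈ I, stirling2 (s + 1) (b + 1) * (b + 1).choose (u + 1) * j ^ (s - b))
      + ∑ b ∈ I, b * stirling2 s b * b.choose (u + 1) * j ^ (s + 1 - b)
      = (∑ b ∈ I, (stirling2 s b * b.choose u * j ^ (s - b)
          + (j * (u + 1) + 1) * (stirling2 s b * b.choose (u + 1) * j ^ (s - b))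
          + j * (u + 2) * (stirling2 s b * b.choose (u + 2) * j ^ (s - b))))
      + ∑ b ∈ I, (b + 1) * stirling2 s (b + 1) * (b + 1).choose (u + 1) * j ^ (s - b) := by
    rw [← Finset.sum_add_distrib, ← Finset.sum_add_distrib]
    exact Finset.sum_congr rfl point
  rw [hG] at hsum
  have hmain : ∑ b ∈ I, stirling2 (s + 1) (b + 1) * (b + 1).choose (u + 1) * j ^ (s - b)
      = ∑ b ∈ I, (stirling2 s b * b.choose u * j ^ (s - b)
          + (j * (u + 1) + 1) * (stirling2 s b * b.choose (u + 1) * j ^ (s - b))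
          + j * (u + 2) * (stirling2 s b * b.choose (u + 2) * j ^ (s - b))) := by
    omega
  calc cSeq j (u + 1) (s + 1)
      = ∑ b ∈ Finset.Icc u s, stirling2 (s + 1) (b + 1) * (b + 1).choose (u + 1) * j ^ (s - b) := by
        rw [cSeq, sum_Icc_shift]
        exact Finset.sum_congr rfl fun b _ => by rw [Nat.succ_sub_succ]
    _ = ∑ b ∈ I, stirling2 (s + 1) (b + 1) * (b + 1).choose (u + 1) * j ^ (s - b) := by
        apply Finset.sum_subset
        · intro x hx; simp only [hI, Finset.mem_Icc] at *; omega
        · intro x hx hx'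
          simp only [hI, Finset.mem_Icc] at hx hx'
          have : x = s + 1 := by omega
          subst this
          rw [stirling2_of_lt (s + 1) (s + 2) (by omega)]; ring
    _ = ∑ b ∈ I, (stirling2 s b * b.choose u * j ^ (s - b)
          + (j * (u + 1) + 1) * (stirling2 s b * b.choose (u + 1) * j ^ (s - b))
          + j * (u + 2) * (stirling2 s b * b.choose (u + 2) * j ^ (s - b))) := hmain
    _ = cSeq j u s + (j * (u + 1) + 1) * cSeq j (u + 1) s + j * (u + 2) * cSeq j (u + 2) s := by
        rw [Finset.sum_add_distrib, Finset.sum_add_distrib, ← Finset.mul_sum, ← Finset.mul_sum,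
          sum_pad j s u u (s + 1) le_rfl (by omega),
          sum_pad j s (u + 1) u (s + 1) (by omega) (by omega),
          sum_pad j s (u + 2) u (s + 1) (by omega) (by omega)]

/-- The sequence `c(t,r) = ∑_{a=t}^r S(r,a) C(a,t) j^{r-a}` satisfies the recurrence
`c(t,r) = c(t-1,r-1) + (jt+1) c(t,r-1) + j(t+1) c(t+1,r-1)` for `1 ≤ t ≤ r`, with
boundary conditions `c(r,r) = 1` and `c(t,r) = 0` for `t > r`. -/
theorem cSeq_recurrence (j : ℕ) (hj : 1 ≤ j) :
    (∀ t r : ℕ, 1 ≤ t → t ≤ r →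
        cSeq j t r = cSeq j (t - 1) (r - 1) + (j * t + 1) * cSeq j t (r - 1)
          + j * (t + 1) * cSeq j (t + 1) (r - 1)) ∧
    (∀ r : ℕ, cSeq j r r = 1) ∧
    (∀ t r : ℕ, r < t → cSeq j t r = 0) := by
  refine ⟨?_, ?_, ?_⟩
  · intro t r ht htr
    obtain ⟨u, rfl⟩ : ∃ u, t = u + 1 := ⟨t - 1, by omega⟩
    obtain ⟨s, rfl⟩ : ∃ s, r = s + 1 := ⟨r - 1, by omega⟩
    simp only [Nat.add_sub_cancel]
    exact cSeq_rec j u s (by omega)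
  · intro r
    simp [cSeq, Finset.Icc_self, stirling2_self]
  · intro t r h
    rw [cSeq, Finset.Icc_eq_empty (by omega), Finset.sum_empty]
end

section
/- In the ring of symmetric functions over ℚ, for a fixed positive integer j and partitions α of n and β of n-j with n > j: p_j·((p_j^⊥ p_α) * p_β) = p_α * (p_j · p_β), where * denotes the Kronecker (internal) product on homogeneous symmetric functions and p_j^⊥ is the adjoint of multiplication by p_j with respect to the Hall inner product. -/
open scoped BigOperators

/-- `zPart μ = ∏_i i^{m_i(μ)} m_i(μ)!`, where `m_i(μ)` is the multiplicity of the
part `i` in the partition (multiset of parts) `μ`. -/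
def zPart (μ : Multiset ℕ) : ℚ :=
  (μ.prod : ℚ) * ∏ i ∈ μ.toFinset, (Nat.factorial (μ.count i) : ℚ)

lemma zPart_pos {μ : Multiset ℕ} (h : ∀ x ∈ μ, 0 < x) : 0 < zPart μ := by
  unfold zPart
  apply mul_pos
  · exact_mod_cast Multiset.prod_pos h
  · exact Finset.prod_pos fun i _ => by exact_mod_cast Nat.factorial_pos _

lemma nondegen
    (R : Type*) [CommRing R] [Algebra ℚ R]
    (p : Multiset ℕ → R)
    (hli : LinearIndependent ℚ (fun μ : {μ : Multiset ℕ // ∀ x ∈ μ, 0 < x} => p μ.1))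
    (hspan : Submodule.span ℚ (p '' {μ : Multiset ℕ | ∀ x ∈ μ, 0 < x}) = ⊤)
    (inner : R →ₗ[ℚ] R →ₗ[ℚ] ℚ)
    (hinner : ∀ μ ν : Multiset ℕ, (∀ x ∈ μ, 0 < x) → (∀ x ∈ ν, 0 < x) →
      inner (p μ) (p ν) = if μ = ν then zPart μ else 0)
    (x : R) (hx : ∀ ν : Multiset ℕ, (∀ t ∈ ν, 0 < t) → inner x (p ν) = 0) :
    x = 0 := by
  have hrange : Set.range (fun μ : {μ : Multiset ℕ // ∀ x ∈ μ, 0 < x} => p μ.1)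
      = p '' {μ : Multiset ℕ | ∀ x ∈ μ, 0 < x} := by
    ext y
    simp [Set.mem_image, Subtype.exists]
  let B : Module.Basis {μ : Multiset ℕ // ∀ x ∈ μ, 0 < x} ℚ R :=
    Module.Basis.mk hli (by rw [hrange, hspan])
  have hB : ∀ i, B i = p i.1 := fun i => Module.Basis.mk_apply hli _ i
  have hrepr : ∀ i, B.repr x i = 0 := by
    intro i
    have h1 : inner x (p i.1) = B.repr x i * zPart i.1 := by
      conv_lhs => rw [← B.linearCombination_repr x]
      rw [Finsupp.linearCombination_apply, Finsupp.sum, map_sum, LinearMap.sum_apply]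
      have : ∀ k ∈ (B.repr x).support,
          inner (B.repr x k • B k) (p i.1) = if k = i then B.repr x k * zPart i.1 else 0 := by
        intro k _
        rw [map_smul, LinearMap.smul_apply, hB, hinner k.1 i.1 k.2 i.2]
        by_cases hk : k = i
        · simp [hk]
        · have : k.1 ≠ i.1 := fun h => hk (Subtype.ext h)
          simp [hk, this]
      rw [Finset.sum_congr rfl this, Finset.sum_ite_eq' _ i]
      by_cases hi : i ∈ (B.repr x).support
      · simp [hi]
      · simp [hi, Finsupp.notMem_support_iff.mp hi]
    have h2 := hx i.1 i.2
    rw [h1] at h2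
    exact (mul_eq_zero.mp h2).resolve_right (ne_of_gt (zPart_pos i.2))
  have h0 : B.repr x = 0 := Finsupp.ext hrepr
  calc x = Finsupp.linearCombination ℚ B (B.repr x) := (B.linearCombination_repr x).symm
    _ = 0 := by rw [h0]; simp

/-- The tensor identity `p_j (p_j^⊥ p_α * p_β) = p_α * (p_j p_β)` in the ring of
symmetric functions over `ℚ`, where `*` is the Kronecker (internal) product and
`p_j^⊥` is the adjoint of multiplication by `p_j` for the Hall inner product.
The ring of symmetric functions is axiomatized as a commutative `ℚ`-algebra `R`
with power-sum elements `p μ` (indexed by partitions, i.e. multisets of positive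
integers) forming a basis, with `p μ * p ν = p (μ + ν)`, Kronecker product
`p_μ ∗ p_ν = δ_{μν} z_μ p_μ`, and Hall pairing `⟨p_μ, p_ν⟩ = δ_{μν} z_μ`. -/
theorem kronecker_tensor_identity
    (R : Type*) [CommRing R] [Algebra ℚ R]
    (p : Multiset ℕ → R)
    (hmul : ∀ μ ν : Multiset ℕ, (∀ x ∈ μ, 0 < x) → (∀ x ∈ ν, 0 < x) →
      p μ * p ν = p (μ + ν))
    (hli : LinearIndependent ℚ (fun μ : {μ : Multiset ℕ // ∀ x ∈ μ, 0 < x} => p μ.1))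
    (hspan : Submodule.span ℚ (p '' {μ : Multiset ℕ | ∀ x ∈ μ, 0 < x}) = ⊤)
    (kron : R →ₗ[ℚ] R →ₗ[ℚ] R)
    (hkron : ∀ μ ν : Multiset ℕ, (∀ x ∈ μ, 0 < x) → (∀ x ∈ ν, 0 < x) →
      kron (p μ) (p ν) = if μ = ν then zPart μ • p μ else 0)
    (inner : R →ₗ[ℚ] R →ₗ[ℚ] ℚ)
    (hinner : ∀ μ ν : Multiset ℕ, (∀ x ∈ μ, 0 < x) → (∀ x ∈ ν, 0 < x) →
      inner (p μ) (p ν) = if μ = ν then zPart μ else 0)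
    (j : ℕ) (hj : 1 ≤ j)
    (perp : R →ₗ[ℚ] R)
    (hperp : ∀ f g : R, inner (perp f) g = inner f (p {j} * g))
    (n : ℕ) (hn : j < n)
    (α β : Multiset ℕ) (hαpos : ∀ x ∈ α, 0 < x) (hβpos : ∀ x ∈ β, 0 < x)
    (hα : α.sum = n) (hβ : β.sum = n - j) :
    p {j} * kron (perp (p α)) (p β) = kron (p α) (p {j} * p β) := by
  have hjpos : ∀ x ∈ ({j} : Multiset ℕ), 0 < x := by
    intro x hx
    rw [Multiset.mem_singleton] at hx
    omega
  set γ : Multiset ℕ := α.erase j with hγ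
  have hγpos : ∀ x ∈ γ, 0 < x := fun x hx => hαpos x (Multiset.mem_of_mem_erase hx)
  -- singleton_add facts
  have hsing : ∀ ν : Multiset ℕ, ({j} : Multiset ℕ) + ν = j ::ₘ ν :=
    fun ν => Multiset.singleton_add j ν
  -- Step 1: compute perp (p α)
  have hperp_val : perp (p α) =
      if j ∈ α then (zPart α / zPart γ) • p γ else 0 := by
    have := nondegen R p hli hspan inner hinner
      (perp (p α) - (if j ∈ α then (zPart α / zPart γ) • p γ else 0)) ?_
    · exact sub_eq_zero.mp this
    · intro ν hν
      rw [map_sub, LinearMap.sub_apply, hperp, hmul {j} ν hjpos hν,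
        hinner α ({j} + ν) hαpos (fun x hx => by
          rw [hsing, Multiset.mem_cons] at hx
          rcases hx with h | h
          · omega
          · exact hν x h)]
      by_cases hjα : j ∈ α
      · rw [if_pos hjα, map_smul, LinearMap.smul_apply, hinner γ ν hγpos hν]
        by_cases hge : γ = ν
        · have hαeq : α = {j} + ν := by
            rw [hsing, ← hge, hγ, Multiset.cons_erase hjα]
          rw [if_pos hαeq, if_pos hge, smul_eq_mul,
            div_mul_cancel₀ _ (ne_of_gt (zPart_pos hγpos)), sub_self]
        · have hαne : α ≠ {j} + ν := by
            intro h
            apply hge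
            rw [hγ, h, hsing, Multiset.erase_cons_head]
          rw [if_neg hαne, if_neg hge, smul_zero, sub_zero]
      · have hαne : α ≠ {j} + ν := by
          intro h
          apply hjα
          rw [h, hsing]
          exact Multiset.mem_cons_self j ν
        rw [if_neg hαne, if_neg hjα, map_zero, LinearMap.zero_apply, sub_zero]
  -- Step 2
  rw [hperp_val, hmul {j} β hjpos hβpos,
    hkron α ({j} + β) hαpos (fun x hx => by
      rw [hsing, Multiset.mem_cons] at hx
      rcases hx with h | h
      · omega
      · exact hβpos x h)]
  by_cases hjα : j ∈ α
  · rw [if_pos hjα, map_smul, LinearMap.smul_apply, hkron γ β hγpos hβpos]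
    by_cases hge : γ = β
    · have hαeq : α = {j} + β := by
        rw [hsing, ← hge, hγ, Multiset.cons_erase hjα]
      rw [if_pos hge, if_pos hαeq, smul_smul,
        div_mul_cancel₀ _ (ne_of_gt (zPart_pos hγpos)), mul_smul_comm,
        hmul {j} γ hjpos hγpos, hsing, hγ, Multiset.cons_erase hjα]
    · have hαne : α ≠ {j} + β := by
        intro h
        apply hge
        rw [hγ, h, hsing, Multiset.erase_cons_head]
      rw [if_neg hge, if_neg hαne]; simp
  · have hαne : α ≠ {j} + β := by
      intro h
      apply hjα
      rw [h, hsing]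
      exact Multiset.mem_cons_self j β
    rw [if_neg hαne, if_neg hjα, map_zero, LinearMap.zero_apply, mul_zero]
end

section
/- For j ≥ 2 and n ≥ 2j, the alternating sum of dimensions ∑_{i=0}^{j-1} (-1)^i · d_{(n-j, j-i, 1^i)} equals -1, where d_λ is the dimension of the irreducible representation of S_n indexed by λ (the number of standard Young tableaux of shape λ). -/
open scoped BigOperators
open Finset

/-- The number of standard Young tableaux of the shape given by the list of row
lengths `l`, via the hook-length formula `d_λ = |λ|! / ∏ h(□)`. -/
noncomputable def dSYT (l : List ℕ) : ℚ :=
  (Nat.factorial l.sum : ℚ) /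
    ∏ i ∈ Finset.range l.length, ∏ j ∈ Finset.range (l.getD i 0),
      ((l.getD i 0 : ℚ) - j + ((l.filter (fun r => decide (j < r))).length : ℚ) - i - 1)



lemma prod_desc (m x : ℕ) (h : m ≤ x) :
    ∏ c ∈ range m, ((x:ℚ) - c) = x.factorial / (x - m).factorial := by
  induction m with
  | zero => simp [eq_comm, div_self (show ((Nat.factorial x : ℚ)) ≠ 0 by positivity)]
  | succ m ih =>
    rw [prod_range_succ, ih (le_of_lt h)]
    have h1 : x - m = (x - (m+1)) + 1 := by omega
    have h2 : ((x - (m+1) + 1 : ℕ) : ℚ) = (x:ℚ) - m := by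
      have : ((x - (m+1) : ℕ) : ℚ) = (x:ℚ) - (m+1) := by
        rw [Nat.cast_sub h]; push_cast; ring
      push_cast [this]; ring
    rw [h1, Nat.factorial_succ]
    have h3 : ((x - (m+1)).factorial : ℚ) ≠ 0 := by positivity
    have h5 : (x:ℚ) - m ≠ 0 := by rw [← h2]; positivity
    rw [Nat.cast_mul, h2, div_mul_eq_mul_div, mul_comm ((x.factorial:ℚ))]
    exact mul_div_mul_left _ _ h5

lemma filt (a b i c : ℕ) :
    ((a :: b :: List.replicate i 1).filter (fun r => decide (c < r))).length
      = (if c < a then 1 else 0) + ((if c < b then 1 else 0) + (if c < 1 then i else 0)) := by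
  have hr : ((List.replicate i 1).filter (fun r => decide (c < r))).length
      = if c < 1 then i else 0 := by
    induction i with
    | zero => simp
    | succ k ih =>
      by_cases h : c < 1 <;> simp [List.replicate_succ, List.filter, h, ih] <;> omega
  by_cases h1 : c < a <;> by_cases h2 : c < b <;>
    simp [List.filter, h1, h2, hr] <;> omega

lemma dval (a b i : ℕ) (hb : 1 ≤ b) (hba : b ≤ a) :
    dSYT (a :: b :: List.replicate i 1)
      = (Nat.factorial (a+b+i) : ℚ) * ((a:ℚ) - b + 1) /
        (((a:ℚ)+i+1) * ((b:ℚ)+i) * a.factorial * (b-1).factorial * i.factorial) := by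
  have hsum : (a :: b :: List.replicate i 1).sum = a + b + i := by
    simp [List.sum_replicate]; ring
  have hlen : (a :: b :: List.replicate i 1).length = i + 2 := by simp
  set l := a :: b :: List.replicate i 1 with hl
  have hget0 : l.getD 0 0 = a := rfl
  have hget1 : l.getD 1 0 = b := rfl
  have hget2 : ∀ c, c < i → l.getD (c+1+1) 0 = 1 := by
    intro c hc
    show (List.replicate i 1).getD c 0 = 1
    rw [List.getD_eq_getElem?_getD, List.getElem?_replicate]
    simp [hc]
  have hF0 : ((l.filter (fun q => decide ((0:ℕ) < q))).length : ℚ) = (i:ℚ) + 2 := by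
    have h1 : 0 < a := lt_of_lt_of_le hb hba
    have h2 : 0 < b := hb
    simp only [hl, filt]
    simp [h1, h2]; ring
  have hFmid : ∀ c : ℕ, 1 ≤ c → c < b →
      ((l.filter (fun q => decide (c < q))).length : ℚ) = 2 := by
    intro c h1 h2
    simp only [hl, filt]
    have h3 : c < a := lt_of_lt_of_le h2 hba
    have h4 : ¬ c < 1 := by omega
    simp [h2, h3, h4]
  have hFhigh : ∀ c : ℕ, b ≤ c → c < a →
      ((l.filter (fun q => decide (c < q))).length : ℚ) = 1 := by
    intro c h1 h2
    simp only [hl, filt]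
    have h3 : ¬ c < b := by omega
    have h4 : ¬ c < 1 := by omega
    simp [h2, h3, h4]
  have inner2 : ∀ c ∈ range i,
      (∏ x ∈ range (l.getD (c+1+1) 0), ((l.getD (c+1+1) 0 : ℚ) - x
          + ((l.filter (fun q => decide (x < q))).length : ℚ) - ((c:ℚ) + 1 + 1) - 1))
        = (i:ℚ) - c := by
    intro c hc
    rw [mem_range] at hc
    rw [hget2 c hc, prod_range_one, hF0]
    push_cast; ring
  have inner1 : (∏ x ∈ range (l.getD 1 0), ((l.getD 1 0 : ℚ) - x
        + ((l.filter (fun q => decide (x < q))).length : ℚ) - 1 - 1))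
      = ((b:ℚ) + i) * (b-1).factorial := by
    rw [hget1, show b = (b-1) + 1 by omega, prod_range_succ']
    have e1 : ∀ c ∈ range (b-1), ((((b-1)+1 : ℕ):ℚ) - ((c+1 : ℕ) : ℚ)
        + ((l.filter (fun q => decide (c+1 < q))).length : ℚ) - 1 - 1)
        = (((b-1:ℕ)):ℚ) - c := by
      intro c hc
      rw [mem_range] at hc
      rw [hFmid (c+1) (by omega) (by omega)]
      push_cast [show b - 1 + 1 = b from by omega, Nat.cast_sub hb]
      ring
    rw [prod_congr rfl e1, prod_desc (b-1) (b-1) le_rfl, hF0]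
    simp
    rw [Nat.cast_sub hb]
    push_cast; ring
  have inner0 : (∏ x ∈ range (l.getD 0 0), ((l.getD 0 0 : ℚ) - x
        + ((l.filter (fun q => decide (x < q))).length : ℚ) - 0 - 1))
      = ((a:ℚ) + i + 1) * ((a.factorial : ℚ) / (a - (b-1)).factorial) * ((a-b).factorial) := by
    rw [hget0, show a = ((b-1) + (a-b)) + 1 by omega, prod_range_succ', prod_range_add]
    have e1 : ∀ c ∈ range (b-1), ((((b-1)+(a-b)+1 : ℕ):ℚ) - ((c+1 : ℕ) : ℚ)
        + ((l.filter (fun q => decide (c+1 < q))).length : ℚ) - 0 - 1)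
        = ((a:ℚ)) - c := by
      intro c hc
      rw [mem_range] at hc
      rw [hFmid (c+1) (by omega) (by omega)]
      push_cast [show b - 1 + (a - b) + 1 = a from by omega]
      ring
    have e2 : ∀ c ∈ range (a-b), ((((b-1)+(a-b)+1 : ℕ):ℚ) - (((b-1)+c+1 : ℕ) : ℚ)
        + ((l.filter (fun q => decide ((b-1)+c+1 < q))).length : ℚ) - 0 - 1)
        = (((a-b:ℕ)):ℚ) - c := by
      intro c hc
      rw [mem_range] at hc
      rw [show (b-1)+c+1 = b + c from by omega, hFhigh (b+c) (by omega) (by omega)]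
      push_cast [show b - 1 + (a - b) + 1 = a from by omega, Nat.cast_sub hba]
      ring
    rw [prod_congr rfl e1, prod_congr rfl e2, prod_desc (b-1) a (by omega),
      prod_desc (a-b) (a-b) le_rfl, hF0]
    push_cast [show b - 1 + (a - b) + 1 = a from by omega]
    simp
    ring
  show (Nat.factorial l.sum : ℚ) /
      (∏ r ∈ range l.length, ∏ j ∈ range (l.getD r 0),
        ((l.getD r 0 : ℚ) - j + ((l.filter (fun q => decide (j < q))).length : ℚ) - r - 1)) = _
  rw [hsum, hlen]
  rw [show i+2 = i+1+1 from rfl, prod_range_succ', prod_range_succ']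
  push_cast
  rw [prod_congr rfl inner2, prod_desc i i le_rfl, inner1, inner0]
  rw [Nat.sub_self, Nat.factorial_zero, show a - (b-1) = (a-b)+1 from by omega,
    Nat.factorial_succ]
  have c1 : ((a - b + 1 : ℕ) : ℚ) = (a:ℚ) - b + 1 := by
    push_cast [Nat.cast_sub hba]; ring
  have n1 : ((a.factorial : ℚ)) ≠ 0 := by positivity
  have n2 : (((b-1).factorial : ℚ)) ≠ 0 := by positivity
  have n3 : ((i.factorial : ℚ)) ≠ 0 := by positivity
  have n4 : (((a-b).factorial : ℚ)) ≠ 0 := by positivity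
  have n5 : ((a:ℚ) + i + 1) ≠ 0 := by positivity
  have n6 : ((b:ℚ) + i) ≠ 0 := by
    have h1 : (1:ℚ) ≤ (b:ℚ) := by exact_mod_cast hb
    have h2 : (0:ℚ) ≤ (i:ℚ) := Nat.cast_nonneg i
    intro h; linarith
  have n7 : ((a:ℚ) - b + 1) ≠ 0 := by
    rw [← c1]; positivity
  push_cast at c1 ⊢
  rw [c1]
  field_simp


lemma sumA (m : ℕ) (hm : 1 ≤ m) :
    ∑ i ∈ range (m+1), (-1:ℚ)^i / ((m-i).factorial * i.factorial) = 0 := by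
  have key : ∀ i ∈ range (m+1), (-1:ℚ)^i / ((m-i).factorial * i.factorial)
      = (1 / m.factorial) * ((-1:ℚ)^i * (m.choose i)) := by
    intro i hi
    rw [mem_range] at hi
    have h1 : m.choose i * i.factorial * (m-i).factorial = m.factorial :=
      Nat.choose_mul_factorial_mul_factorial (by omega)
    have h2 : ((m.choose i) : ℚ) * i.factorial * (m-i).factorial = (m.factorial : ℚ) := by
      exact_mod_cast h1
    have n1 : ((i.factorial : ℚ)) ≠ 0 := by positivity
    have n2 : (((m-i).factorial : ℚ)) ≠ 0 := by positivity
    have n3 : ((m.factorial : ℚ)) ≠ 0 := by positivity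
    field_simp
    rw [← h2]
    ring
  rw [sum_congr rfl key, ← mul_sum]
  have h3 : ∑ i ∈ range (m+1), (-1:ℚ)^i * (m.choose i) = 0 := by
    have := Int.alternating_sum_range_choose_of_ne (show m ≠ 0 by omega)
    exact_mod_cast congrArg (fun z : ℤ => (z : ℚ)) this
  rw [h3, mul_zero]

lemma sumB (m : ℕ) : ∀ x : ℕ, 1 ≤ x →
    ∑ i ∈ range (m+1), (-1:ℚ)^i / (((x:ℚ)+i) * (m-i).factorial * i.factorial)
      = (x-1).factorial / (x+m).factorial := by
  induction m with
  | zero =>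
    intro x hx
    rw [show (0:ℕ)+1 = 1 from rfl, sum_range_one]
    have hfac : (x.factorial : ℚ) = x * (x-1).factorial := by
      exact_mod_cast (Nat.mul_factorial_pred (by omega)).symm
    have n1 : (((x-1).factorial : ℚ)) ≠ 0 := by positivity
    have n2 : ((x:ℚ)) ≠ 0 := by
      simpa using (Nat.cast_pos (α := ℚ)).2 (show 0 < x by omega) |>.ne'
    rw [Nat.add_zero, hfac]
    norm_num
    field_simp
  | succ m ih =>
    intro x hx
    have key : ∀ i ∈ range (m+1+1), (-1:ℚ)^i / (((x:ℚ)+i) * (m+1-i).factorial * i.factorial)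
        = (1/((m:ℚ)+1)) * ((-1:ℚ)^i * ((m+1-i : ℕ):ℚ) / (((x:ℚ)+i) * (m+1-i).factorial * i.factorial)
            + (-1:ℚ)^i * (i:ℚ) / (((x:ℚ)+i) * (m+1-i).factorial * i.factorial)) := by
      intro i hi
      rw [mem_range] at hi
      have hc : (-1:ℚ)^i * ((m+1-i : ℕ):ℚ) + (-1:ℚ)^i * (i:ℚ) = ((m:ℚ)+1) * (-1)^i := by
        have : ((m+1-i : ℕ):ℚ) + i = (m:ℚ) + 1 := by
          push_cast [Nat.cast_sub (show i ≤ m+1 by omega)]; ring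
        linear_combination ((-1:ℚ)^i) * this
      have n4 : ((m:ℚ)+1) ≠ 0 := by positivity
      rw [← add_div, hc, div_mul_div_comm, one_mul]
      exact (mul_div_mul_left _ _ n4).symm
    rw [sum_congr rfl key, ← mul_sum, sum_add_distrib]
    have hA : ∑ i ∈ range (m+1+1),
        (-1:ℚ)^i * ((m+1-i : ℕ):ℚ) / (((x:ℚ)+i) * (m+1-i).factorial * i.factorial)
        = ((x-1).factorial : ℚ) / (x+m).factorial := by
      rw [sum_range_succ, show m+1-(m+1) = 0 from by omega]
      simp only [Nat.cast_zero]
      rw [mul_zero, zero_div, add_zero]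
      have e : ∀ i ∈ range (m+1),
          (-1:ℚ)^i * ((m+1-i : ℕ):ℚ) / (((x:ℚ)+i) * (m+1-i).factorial * i.factorial)
          = (-1:ℚ)^i / (((x:ℚ)+i) * (m-i).factorial * i.factorial) := by
        intro i hi
        rw [mem_range] at hi
        rw [show m+1-i = (m-i)+1 from by omega, Nat.factorial_succ]
        have n1 : ((i.factorial : ℚ)) ≠ 0 := by positivity
        have n2 : (((m-i).factorial : ℚ)) ≠ 0 := by positivity
        have n3 : ((x:ℚ)+i) ≠ 0 := by positivity
        have n4 : ((m-i : ℕ):ℚ) + 1 ≠ 0 := by positivity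
        push_cast
        field_simp
      rw [sum_congr rfl e, ih x hx]
    have hB : ∑ i ∈ range (m+1+1),
        (-1:ℚ)^i * (i:ℚ) / (((x:ℚ)+i) * (m+1-i).factorial * i.factorial)
        = -((x.factorial : ℚ) / (x+m+1).factorial) := by
      rw [sum_range_succ']
      simp only [Nat.cast_zero, mul_zero, zero_div, add_zero]
      have e : ∀ i ∈ range (m+1),
          (-1:ℚ)^(i+1) * (((i+1:ℕ)):ℚ) / (((x:ℚ)+((i+1:ℕ):ℚ)) * (m+1-(i+1)).factorial * (i+1).factorial)
          = -((-1:ℚ)^i / (((((x+1:ℕ)):ℚ))+i) / ((m-i).factorial * i.factorial)) := by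
        intro i hi
        rw [mem_range] at hi
        rw [show m+1-(i+1) = m-i from by omega, Nat.factorial_succ, pow_succ]
        have n1 : ((i.factorial : ℚ)) ≠ 0 := by positivity
        have n2 : (((m-i).factorial : ℚ)) ≠ 0 := by positivity
        have n3 : ((x:ℚ)+((i:ℚ)+1)) ≠ 0 := by positivity
        have n4 : ((i:ℚ)) + 1 ≠ 0 := by positivity
        push_cast
        field_simp
        ring
      rw [sum_congr rfl e, show (x:ℕ)+m+1 = (x+1)+m from by omega]
      have := ih (x+1) (by omega)
      rw [show x+1-1 = x from by omega] at this
      rw [← this, ← sum_neg_distrib]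
      apply sum_congr rfl
      intro i hi
      rw [div_div, mul_assoc]
    rw [hA, hB]
    have hfac1 : ((x+m+1).factorial : ℚ) = ((x:ℚ)+m+1) * (x+m).factorial := by
      rw [show x+m+1 = (x+m)+1 from rfl, Nat.factorial_succ]; push_cast; ring
    have hfac2 : (x.factorial : ℚ) = x * (x-1).factorial := by
      exact_mod_cast (Nat.mul_factorial_pred (by omega)).symm
    rw [show x+(m+1) = x+m+1 from by omega, hfac1, hfac2]
    have n1 : (((x-1).factorial : ℚ)) ≠ 0 := by positivity
    have n2 : (((x+m).factorial : ℚ)) ≠ 0 := by positivity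
    have n3 : ((m:ℚ)+1) ≠ 0 := by positivity
    have n4 : ((x:ℚ)+m+1) ≠ 0 := by positivity
    field_simp
    ring

/-- For `j ≥ 2` and `n ≥ 2j`, `∑_{i=0}^{j-1} (-1)^i d_{(n-j, j-i, 1^i)} = -1`. -/
theorem alternating_dim_sum (n j : ℕ) (hj : 2 ≤ j) (hn : 2 * j ≤ n) :
    ∑ i ∈ Finset.range j,
        (-1 : ℚ) ^ i * dSYT ((n - j) :: (j - i) :: List.replicate i 1) = -1 := by
  set C : ℚ := (n.factorial : ℚ) / ((j:ℚ) * (n-j).factorial) with hC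
  have key : ∀ i ∈ range j, (-1:ℚ)^i * dSYT ((n - j) :: (j - i) :: List.replicate i 1)
      = C * ((-1:ℚ)^i / ((j-1-i).factorial * i.factorial))
        - (C * j) * ((-1:ℚ)^i / (((((n-j+1:ℕ)):ℚ)+i) * ((j-1-i).factorial * i.factorial))) := by
    intro i hi
    rw [mem_range] at hi
    rw [dval (n-j) (j-i) i (by omega) (by omega)]
    rw [show (n-j)+(j-i)+i = n from by omega, show (j-i)-1 = j-1-i from by omega]
    have c1 : ((n-j:ℕ):ℚ) = (n:ℚ) - j := by rw [Nat.cast_sub (by omega)]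
    have c2 : ((j-i:ℕ):ℚ) = (j:ℚ) - i := by rw [Nat.cast_sub (by omega)]
    have c3 : ((n-j+1:ℕ):ℚ) = (n:ℚ) - j + 1 := by push_cast [Nat.cast_sub (show j ≤ n by omega)]; ring
    have n1 : ((n.factorial : ℚ)) ≠ 0 := by positivity
    have n2 : (((n-j).factorial : ℚ)) ≠ 0 := by positivity
    have n3 : (((j-1-i).factorial : ℚ)) ≠ 0 := by positivity
    have n4 : ((i.factorial : ℚ)) ≠ 0 := by positivity
    have n5 : ((n:ℚ) - j + i + 1) ≠ 0 := by
      have h0 : (0:ℚ) < ((n-j+1:ℕ):ℚ) + i := by positivity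
      rw [c3] at h0
      intro h; rw [show ((n:ℚ) - ↑j + 1 + ↑i) = (n:ℚ) - ↑j + ↑i + 1 from by ring] at h0
      linarith
    have n6 : ((j:ℚ)) ≠ 0 := by positivity
    have n7 : ((j:ℚ) - i + i) ≠ 0 := by
      intro h; apply n6; linarith
    rw [hC, c3, c1, c2]
    rw [show ((j:ℚ) - ↑i + ↑i) = (j:ℚ) from by ring]
    set X : ℚ := (n:ℚ) - j + i + 1 with hX
    rw [show ((n:ℚ) - ↑j + 1 + ↑i) = X from by rw [hX]; ring]
    have n5' : X ≠ 0 := n5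
    field_simp
    ring
  rw [sum_congr rfl key, sum_sub_distrib, ← mul_sum, ← mul_sum]
  have hrange : range j = range ((j-1)+1) := by rw [Nat.sub_add_cancel (by omega)]
  have hA : ∑ i ∈ range j, (-1:ℚ)^i / ((j-1-i).factorial * i.factorial) = 0 := by
    rw [hrange]; exact sumA (j-1) (by omega)
  have hB : ∑ i ∈ range j, (-1:ℚ)^i / (((((n-j+1:ℕ)):ℚ)+i) * ((j-1-i).factorial * i.factorial))
      = ((n-j).factorial : ℚ) / n.factorial := by
    rw [hrange]
    have := sumB (j-1) (n-j+1) (by omega)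
    rw [show n-j+1-1 = n-j from by omega, show n-j+1+(j-1) = n from by omega] at this
    rw [← this]
    apply sum_congr rfl
    intro i hi
    rw [mul_assoc]
  rw [hA, hB, mul_zero, zero_sub, hC]
  have n1 : ((n.factorial : ℚ)) ≠ 0 := by positivity
  have n2 : (((n-j).factorial : ℚ)) ≠ 0 := by positivity
  have n6 : ((j:ℚ)) ≠ 0 := by positivity
  field_simp
end
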